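/- If b : ℕ → ℝ satisfies b(k) ≥ b(k−1) + b(k−3) for all odd k ≥ 5 and b(k) ≥ 2·b(k−2) for all even k ≥ 4, with b(2) ≥ 2 and b(3) ≥ 3, then b(k) ≥ (√2)^k for all even k ≥ 2 and b(k) ≥ (3/(2√2))·(√2)^k for all odd k ≥ 3. -/
import Mathlib


theorem stmt14 (b : ℕ → ℝ)
    (hodd : ∀ k, 5 ≤ k → Odd k → b k ≥ b (k - 1) + b (k - 3))
    (heven : ∀ k, 4 ≤ k → Even k → b k ≥ 2 * b (k - 2))
    (h0 : b 0 ≥ 1) (h1 : b 1 ≥ 2) (h2 : b 2 ≥ 2) (h3 : b 3 ≥ 3) :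
    ∀ k, 2 ≤ k →
      (Even k → b k ≥ (Real.sqrt 2) ^ k) ∧
      (Odd k → b k ≥ (3 / (2 * Real.sqrt 2)) * (Real.sqrt 2) ^ k) := by
  have hs : Real.sqrt 2 ^ 2 = 2 := Real.sq_sqrt (by norm_num)
  have hsp : (0:ℝ) < Real.sqrt 2 := Real.sqrt_pos.2 (by norm_num)
  intro k
  induction k using Nat.strong_induction_on with
  | _ k ih =>
    intro hk
    constructor
    · intro hev
      obtain ⟨m, hm⟩ := hev
      rcases eq_or_lt_of_le hk with h | h
      · rw [← h]; simpa [hs] using h2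
      · have hk4 : 4 ≤ k := by omega
        have hb := heven k hk4 ⟨m, hm⟩
        have ihe : b (k - 2) ≥ Real.sqrt 2 ^ (k - 2) :=
          (ih (k - 2) (by omega) (by omega)).1 ⟨m - 1, by omega⟩
        calc b k ≥ 2 * b (k - 2) := hb
          _ ≥ 2 * Real.sqrt 2 ^ (k - 2) := by linarith
          _ = Real.sqrt 2 ^ k := by
              have e : Real.sqrt 2 ^ k = Real.sqrt 2 ^ 2 * Real.sqrt 2 ^ (k - 2) := by
                rw [← pow_add]; congr 1; omega
              rw [e, hs]
    · intro hod
      obtain ⟨m, hm⟩ := hod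
      rcases eq_or_lt_of_le hk with h | h
      · omega
      · rcases Nat.lt_or_ge k 5 with h5 | h5
        · have : k = 3 := by omega
          subst this
          have : (3 / (2 * Real.sqrt 2)) * (Real.sqrt 2) ^ 3 = 3 := by
            rw [pow_succ, hs]
            field_simp
          rw [this]; exact h3
        · have hb := hodd k h5 ⟨m, hm⟩
          have ih1 : b (k - 1) ≥ Real.sqrt 2 ^ (k - 1) :=
            (ih (k - 1) (by omega) (by omega)).1 ⟨m, by omega⟩
          have ih3 : b (k - 3) ≥ Real.sqrt 2 ^ (k - 3) :=
            (ih (k - 3) (by omega) (by omega)).1 ⟨m - 1, by omega⟩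
          have key : Real.sqrt 2 ^ (k - 1) + Real.sqrt 2 ^ (k - 3)
              = (3 / (2 * Real.sqrt 2)) * (Real.sqrt 2) ^ k := by
            have e1 : Real.sqrt 2 ^ (k - 1) = Real.sqrt 2 ^ (k - 3) * 2 := by
              have e : Real.sqrt 2 ^ (k - 1) = Real.sqrt 2 ^ (k - 3) * Real.sqrt 2 ^ 2 := by
                rw [← pow_add]; congr 1; omega
              rw [e, hs]
            have e2 : Real.sqrt 2 ^ k = Real.sqrt 2 ^ (k - 3) * (2 * Real.sqrt 2) := by
              have h3' : (2 : ℝ) * Real.sqrt 2 = Real.sqrt 2 ^ 3 := by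
                rw [pow_succ, hs]
              rw [h3', ← pow_add]
              congr 1
              omega
            rw [e1, e2]
            field_simp
            ring
          linarith
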